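/- For every real θ with 0 < θ ≤ 1/2, one has φ(θ) ≤ tan((π/2)·θ) < (π/2)·φ(θ); and for every real θ with 1/2 < θ < 1, one has (2/π)·φ(θ) < tan((π/2)·θ) < φ(θ). -/

import Mathlib

open Real

-- Upper bound: tan x < π x / (π - 2x) for 0 < x ≤ π/4.
lemma tanB (x : ℝ) (hx : 0 < x) (hx4 : x ≤ π/4) : Real.tan x < π * x / (π - 2*x) := by
  have hpi : (3.141592 : ℝ) < π := by
    have := Real.pi_gt_d6; linarith
  have hx2 : x < π/2 := by linarith
  have hc : 0 < Real.cos x := Real.cos_pos_of_mem_Ioo ⟨by linarith, hx2⟩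
  have hs : Real.sin x < x := Real.sin_lt hx
  have hcl : 1 - x^2/2 < Real.cos x := Real.one_sub_sq_div_two_lt_cos (ne_of_gt hx)
  have hd : 0 < π - 2*x := by linarith
  have hpi' : π < 3.15 := by have := Real.pi_lt_d2; linarith
  rw [Real.tan_eq_sin_div_cos, div_lt_div_iff₀ hc hd]
  -- sin x * (π - 2x) < π x cos x
  have h4 : (0:ℝ) ≤ 4 - π*x := by nlinarith
  nlinarith [mul_lt_mul_of_pos_right hs hd,
    mul_lt_mul_of_pos_left hcl (by positivity : (0:ℝ) < π*x),
    mul_nonneg (sq_nonneg x) h4]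

-- Lower bound: 2x/(π-2x) < tan x for 0 < x < π/4.
lemma tanA (x : ℝ) (hx : 0 < x) (hx4 : x < π/4) : 2*x/(π - 2*x) < Real.tan x := by
  have hpi : (3.141592 : ℝ) < π := by
    have := Real.pi_gt_d6; linarith
  have hpi' : π < 3.15 := by have := Real.pi_lt_d2; linarith
  have hx2 : x < π/2 := by linarith
  have hc : 0 < Real.cos x := Real.cos_pos_of_mem_Ioo ⟨by linarith, hx2⟩
  have hd : 0 < π - 2*x := by linarith
  rcases le_or_gt x ((π-2)/2) with h | h
  · -- tan x > x ≥ 2x/(π-2x)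
    have ht := Real.lt_tan hx hx2
    have : 2*x/(π - 2*x) ≤ x := by
      rw [div_le_iff₀ hd]; nlinarith
    linarith
  · -- tangent line at π/4
    have key : ∀ v:ℝ, 0 < v → v < 1 →
        (1 - 2*v) * Real.cos (π/4 - v) < Real.sin (π/4 - v) := by
      intro v hv0 hv1
      rw [Real.sin_sub, Real.cos_sub, Real.sin_pi_div_four, Real.cos_pi_div_four]
      have hsv := Real.sin_lt hv0
      have hcv := Real.one_sub_sq_div_two_lt_cos (ne_of_gt hv0)
      have h2 : (0:ℝ) < Real.sqrt 2 := by positivity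
      have hpoly : Real.sin v * (1-v) < v * Real.cos v := by nlinarith
      nlinarith [mul_pos h2 (sub_pos.mpr hpoly)]
    have key2 := key (π/4 - x) (by linarith) (by linarith)
    rw [show π/4 - (π/4 - x) = x by ring] at key2
    -- key2 : (1 - 2*(π/4 - x)) * cos x < sin x
    have hpos : 0 < 1 + 2*x - π/2 := by linarith
    have quad : 2*x ≤ (1 + 2*x - π/2) * (π - 2*x) := by nlinarith
    rw [Real.tan_eq_sin_div_cos, div_lt_div_iff₀ hd hc]
    calc 2*x * Real.cos x ≤ (1 + 2*x - π/2) * (π - 2*x) * Real.cos x := by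
          nlinarith
      _ < Real.sin x * (π - 2*x) := by nlinarith [mul_pos hpos hc]

theorem stmt_1 (φ : ℝ → ℝ) (hφ : ∀ θ, φ θ = θ / (1 - θ)) :
    (∀ θ : ℝ, 0 < θ → θ ≤ 1/2 →
      φ θ ≤ Real.tan (π/2 * θ) ∧ Real.tan (π/2 * θ) < π/2 * φ θ) ∧
    (∀ θ : ℝ, 1/2 < θ → θ < 1 →
      2/π * φ θ < Real.tan (π/2 * θ) ∧ Real.tan (π/2 * θ) < φ θ) := by
  have hpi : (0:ℝ) < π := Real.pi_pos
  constructor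
  · intro θ h0 h1
    rw [hφ]
    have h1θ : 0 < 1 - θ := by linarith
    set x := π/2 * θ with hx
    have hx0 : 0 < x := by positivity
    have hx4 : x ≤ π/4 := by rw [hx]; nlinarith
    have hne : (1:ℝ) - θ ≠ 0 := ne_of_gt h1θ
    have heq1 : θ / (1-θ) = 2*x/(π - 2*x) := by
      rw [hx, show π - 2*(π/2*θ) = π*(1-θ) by ring,
        show 2*(π/2*θ) = π*θ by ring, mul_div_mul_left _ _ (ne_of_gt hpi)]
    have heq2 : π/2 * (θ / (1-θ)) = π*x/(π - 2*x) := by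
      rw [hx, show π - 2*(π/2*θ) = π*(1-θ) by ring,
        mul_div_mul_left _ _ (ne_of_gt hpi), mul_div_assoc]
    constructor
    · rcases lt_or_eq_of_le hx4 with h | h
      · rw [heq1]; exact le_of_lt (tanA x hx0 h)
      · rw [heq1, h, Real.tan_pi_div_four]
        rw [div_le_one (by linarith)]; linarith
    · rw [heq2]; exact tanB x hx0 hx4
  · intro θ h1 h2
    rw [hφ]
    have h1θ : 0 < 1 - θ := by linarith
    have hθ0 : 0 < θ := by linarith
    set y := π/2 * (1 - θ) with hy
    have hy0 : 0 < y := by positivity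
    have hy4 : y < π/4 := by rw [hy]; nlinarith
    have hty : 0 < Real.tan y := Real.tan_pos_of_pos_of_lt_pi_div_two hy0 (by nlinarith)
    have hrw : Real.tan (π/2 * θ) = (Real.tan y)⁻¹ := by
      rw [← Real.tan_pi_div_two_sub, hy]; ring_nf
    have hA := tanA y hy0 hy4
    have hB := tanB y hy0 (le_of_lt hy4)
    have hdy : 0 < π - 2*y := by nlinarith
    have hfrac : 0 < 2*y/(π-2*y) := by positivity
    constructor
    · rw [hrw]
      have : (Real.tan y)⁻¹ > (π*y/(π-2*y))⁻¹ := by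
        apply inv_strictAnti₀ hty hB
      have heq : (π*y/(π-2*y))⁻¹ = 2/π * (θ/(1-θ)) := by
        rw [hy]; field_simp; ring
      linarith [heq ▸ this]
    · rw [hrw]
      have : (Real.tan y)⁻¹ < (2*y/(π-2*y))⁻¹ := by
        apply inv_strictAnti₀ hfrac hA
      have heq : (2*y/(π-2*y))⁻¹ = θ/(1-θ) := by
        rw [hy]; field_simp; ring
      linarith [heq ▸ this]
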